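/- Let x ∈ (-1,1) and let Q(t) = (t^2 - x^2)/2. Then Q(x) = 0, Q'(1) = 1, Q'(-1) = -1, and with c = 3/(3x^2+1), the function y(t) = c(Q(t) - |t-x|) + 1 has zero mean on (-1,1) and satisfies ∫_{-1}^{1} (y'(t))^2 dt = 2c = 6/(3x^2+1). -/

import Mathlib

open MeasureTheory intervalIntegral

lemma poly_integral (p q r a b : ℝ) :
    (∫ t in a..b, (p * t ^ 2 + q * t + r)) =
      (p / 3 * b ^ 3 + q / 2 * b ^ 2 + r * b) -
      (p / 3 * a ^ 3 + q / 2 * a ^ 2 + r * a) := by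
  have h : ∀ t : ℝ, HasDerivAt (fun t : ℝ => p / 3 * t ^ 3 + q / 2 * t ^ 2 + r * t)
      (p * t ^ 2 + q * t + r) t := by
    intro t
    have := (((hasDerivAt_pow 3 t).const_mul (p / 3)).add
        ((hasDerivAt_pow 2 t).const_mul (q / 2))).add ((hasDerivAt_id t).const_mul r)
    refine this.congr_deriv ?_
    push_cast; ring
  exact integral_eq_sub_of_hasDerivAt (fun t _ => h t)
    ((by fun_prop : Continuous fun t : ℝ => p * t ^ 2 + q * t + r).intervalIntegrable _ _)

theorem key_identity_m1 (x : ℝ) (hx : x ∈ Set.Ioo (-1:ℝ) 1) :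
    let Q : ℝ → ℝ := fun t => (t ^ 2 - x ^ 2) / 2
    let c : ℝ := 3 / (3 * x ^ 2 + 1)
    let y : ℝ → ℝ := fun t => c * (Q t - |t - x|) + 1
    let y' : ℝ → ℝ := fun t => if t < x then c * (t + 1) else c * (t - 1)
    Q x = 0 ∧ deriv Q 1 = 1 ∧ deriv Q (-1) = -1 ∧
    (∫ t in (-1:ℝ)..1, y t) = 0 ∧
    (∫ t in (-1:ℝ)..1, (y' t) ^ 2) = 2 * c ∧
    2 * c = 6 / (3 * x ^ 2 + 1) := by
  intro Q c y y'
  obtain ⟨hx1, hx2⟩ := hx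
  have hx1' : (-1:ℝ) ≤ x := hx1.le
  have hx2' : x ≤ 1 := hx2.le
  have hden : (3 * x ^ 2 + 1) ≠ 0 := by positivity
  have hc : c = 3 / (3 * x ^ 2 + 1) := rfl
  have hne : ∀ᵐ t : ℝ, t ≠ x := by
    rw [MeasureTheory.ae_iff]
    simpa using Real.volume_singleton (a := x)
  have hQx : Q x = 0 := by simp [Q]
  have hdQ : ∀ t : ℝ, HasDerivAt Q t t := by
    intro t
    have := ((hasDerivAt_pow 2 t).sub_const (x ^ 2)).div_const 2
    refine this.congr_deriv ?_
    push_cast; ring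
  -- fun_prop of y
  have hycont : Continuous y := by
    apply Continuous.add _ continuous_const
    apply Continuous.mul continuous_const
    apply Continuous.sub
    · exact (by fun_prop : Continuous Q)
    · exact (continuous_id.sub continuous_const).abs
  -- mean integral
  have hmean : (∫ t in (-1:ℝ)..1, y t) = 0 := by
    have hsplit : (∫ t in (-1:ℝ)..1, y t) =
        (∫ t in (-1:ℝ)..x, y t) + ∫ t in x..1, y t :=
      (integral_add_adjacent_intervals (hycont.intervalIntegrable _ _)
        (hycont.intervalIntegrable _ _)).symm
    have e1 : (∫ t in (-1:ℝ)..x, y t) =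
        ∫ t in (-1:ℝ)..x, ((c / 2) * t ^ 2 + c * t + (c * (-x ^ 2 / 2 - x) + 1)) := by
      apply integral_congr
      intro t ht
      rw [Set.uIcc_of_le hx1'] at ht
      have habs : |t - x| = x - t := by
        rw [abs_of_nonpos (by linarith [ht.2])]; ring
      simp only [y, Q, habs]; ring
    have e2 : (∫ t in x..(1:ℝ), y t) =
        ∫ t in x..(1:ℝ), ((c / 2) * t ^ 2 + (-c) * t + (c * (-x ^ 2 / 2 + x) + 1)) := by
      apply integral_congr
      intro t ht
      rw [Set.uIcc_of_le hx2'] at ht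
      have habs : |t - x| = t - x := abs_of_nonneg (by linarith [ht.1])
      simp only [y, Q, habs]; ring
    rw [hsplit, e1, e2, poly_integral, poly_integral, hc]
    field_simp
    ring
  -- derivative-square integral
  have hsq : (∫ t in (-1:ℝ)..1, (y' t) ^ 2) = 2 * c := by
    have g1cont : Continuous fun t : ℝ => c ^ 2 * t ^ 2 + (2 * c ^ 2) * t + c ^ 2 := by
      fun_prop
    have g2cont : Continuous fun t : ℝ => c ^ 2 * t ^ 2 + (-(2 * c ^ 2)) * t + c ^ 2 := by
      fun_prop
    have hcong1 : (fun t => (y' t) ^ 2) =ᶠ[ae (volume.restrict (Set.Ioc (-1:ℝ) x))]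
        fun t => c ^ 2 * t ^ 2 + (2 * c ^ 2) * t + c ^ 2 := by
      filter_upwards [MeasureTheory.ae_restrict_mem measurableSet_Ioc,
        MeasureTheory.ae_restrict_of_ae hne] with t ht htx
      have : t < x := lt_of_le_of_ne ht.2 htx
      simp only [y', if_pos this]; ring
    have hcong2 : ∀ t ∈ Set.uIcc x (1:ℝ),
        (y' t) ^ 2 = c ^ 2 * t ^ 2 + (-(2 * c ^ 2)) * t + c ^ 2 := by
      intro t ht
      rw [Set.uIcc_of_le hx2'] at ht
      have : ¬ t < x := not_lt.2 ht.1
      simp only [y', if_neg this]; ring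
    have hInt1 : IntervalIntegrable (fun t => (y' t) ^ 2) volume (-1) x := by
      rw [intervalIntegrable_iff_integrableOn_Ioc_of_le hx1']
      exact (g1cont.integrableOn_Ioc).congr hcong1.symm
    have hInt2 : IntervalIntegrable (fun t => (y' t) ^ 2) volume x 1 := by
      rw [intervalIntegrable_iff_integrableOn_Ioc_of_le hx2']
      apply (g2cont.integrableOn_Ioc).congr
      filter_upwards [MeasureTheory.ae_restrict_mem measurableSet_Ioc] with t ht
      exact (hcong2 t (by rw [Set.uIcc_of_le hx2']; exact ⟨ht.1.le, ht.2⟩)).symm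
    have hsplit : (∫ t in (-1:ℝ)..1, (y' t) ^ 2) =
        (∫ t in (-1:ℝ)..x, (y' t) ^ 2) + ∫ t in x..1, (y' t) ^ 2 :=
      (integral_add_adjacent_intervals hInt1 hInt2).symm
    have e1 : (∫ t in (-1:ℝ)..x, (y' t) ^ 2) =
        ∫ t in (-1:ℝ)..x, (c ^ 2 * t ^ 2 + (2 * c ^ 2) * t + c ^ 2) := by
      apply intervalIntegral.integral_congr_ae
      filter_upwards [hne] with t htx hmem
      rw [Set.uIoc_of_le hx1'] at hmem
      have : t < x := lt_of_le_of_ne hmem.2 htx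
      simp only [y', if_pos this]; ring
    have e2 : (∫ t in x..(1:ℝ), (y' t) ^ 2) =
        ∫ t in x..(1:ℝ), (c ^ 2 * t ^ 2 + (-(2 * c ^ 2)) * t + c ^ 2) :=
      integral_congr hcong2
    rw [hsplit, e1, e2, poly_integral, poly_integral, hc]
    field_simp
    ring
  refine ⟨hQx, ?_, ?_, hmean, hsq, by rw [hc]; ring⟩
  · exact (hdQ 1).deriv
  · exact (hdQ (-1)).deriv
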